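/- (Convergence of synchronous projective splitting.) Let H and G_1, …, G_m be real Hilbert spaces, let A_i : G_i → 2^{G_i} (i = 1, …, m) and A_{m+1} : H → 2^H be maximally monotone, and let L_i : H → G_i be bounded linear operators. On the product Hilbert space 𝒦 := G_1 × ⋯ × G_m × H with elements p = (w_1, …, w_m, x), define B : 𝒦 → 2^𝒦 by ((w_1, …, w_m, x), (v_1, …, v_m, y)) ∈ gph(B) iff w_i ∈ A_i(v_i) for every i and y ∈ A_{m+1}(x), and define the bounded linear skew-adjoint operator K : 𝒦 → 𝒦 by K(w_1, …, w_m, x) := (−L_1 x, …, −L_m x, Σ_{i=1}^m L_i* w_i). Assume zer(B + K) := {p : −Kp ∈ Bp} is nonempty. Let ε, ε_θ ∈ (0, 1), step sizes τ_{i,k} ∈ [ε, 1/ε] (i = 1, …, m+1, k ∈ ℕ), relaxations θ_k ∈ [ε_θ, 2 − ε_θ], and let Q_k : 𝒦 → 𝒦 be the block-diagonal operator Q_k(w_1, …, w_m, x) := (τ_{1,k} w_1, …, τ_{m,k} w_m, τ_{m+1,k}⁻¹ x). Let p_0 ∈ 𝒦 and for each k: let p̂_k be the unique point with Q_k p_k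 − K p_k − Q_k p̂_k ∈ B p̂_k; if (Q_k − K)(p_k − p̂_k) ≠ 0 set μ_k := ⟨p_k − p̂_k, Q_k(p_k − p̂_k)⟩ / ‖(Q_k − K)(p_k − p̂_k)‖² and p_{k+1} := p_k − θ_k μ_k ((Q_k − K)p_k − (Q_k − K)p̂_k); otherwise p_{k+1} := p_k. Then p_k converges weakly to some p̄ ∈ zer(B + K). -/

import Mathlib

open Filter Topology

/-- A set-valued operator (identified with its graph) is monotone. -/
def IsMonotoneOp {E : Type*} [NormedAddCommGroup E] [InnerProductSpace ℝ E]
    (A : E → Set E) : Prop :=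
  ∀ ⦃x u y v⦄, u ∈ A x → v ∈ A y → (0:ℝ) ≤ inner ℝ (u - v) (x - y)

/-- A set-valued operator is maximally monotone. -/
def IsMaxMonotoneOp {E : Type*} [NormedAddCommGroup E] [InnerProductSpace ℝ E]
    (A : E → Set E) : Prop :=
  IsMonotoneOp A ∧ ∀ x u, (∀ y v, v ∈ A y → (0:ℝ) ≤ inner ℝ (u - v) (x - y)) → u ∈ A x

section Aux
open scoped RealInnerProductSpace

variable {E : Type*} [NormedAddCommGroup E] [InnerProductSpace ℝ E] [CompleteSpace E]

lemma ultra_weak_limit (p : ℕ → E) (M : ℝ) (hM : ∀ k, ‖p k‖ ≤ M)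
    (V : Ultrafilter ℕ) :
    ∃ pb : E, ∀ q : E, Tendsto (fun k => ⟪p k, q⟫) (V : Filter ℕ) (nhds ⟪pb, q⟫) := by
  have hex : ∀ q : E, ∃ L : ℝ, L ∈ Set.Icc (-(M * ‖q‖)) (M * ‖q‖) ∧
      Tendsto (fun k => ⟪p k, q⟫) (V : Filter ℕ) (nhds L) := by
    intro q
    have hmem : ∀ k, ⟪p k, q⟫ ∈ Set.Icc (-(M * ‖q‖)) (M * ‖q‖) := by
      intro k
      have h1 : |⟪p k, q⟫| ≤ ‖p k‖ * ‖q‖ := abs_real_inner_le_norm _ _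
      have h2 : ‖p k‖ * ‖q‖ ≤ M * ‖q‖ :=
        mul_le_mul_of_nonneg_right (hM k) (norm_nonneg q)
      have := abs_le.mp (h1.trans h2)
      exact ⟨this.1, this.2⟩
    have hle : (V.map (fun k => ⟪p k, q⟫) : Filter ℝ) ≤ 𝓟 (Set.Icc (-(M * ‖q‖)) (M * ‖q‖)) := by
      rw [le_principal_iff]
      exact Filter.mem_map.mpr (Filter.Eventually.of_forall hmem)
    obtain ⟨L, hL, hconv⟩ := (isCompact_Icc (a := -(M * ‖q‖)) (b := M * ‖q‖)).ultrafilter_le_nhds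
      (V.map (fun k => ⟪p k, q⟫)) hle
    exact ⟨L, hL, hconv⟩
  choose f hf1 hf2 using hex
  have hadd : ∀ q r : E, f (q + r) = f q + f r := by
    intro q r
    have h1 : Tendsto (fun k => ⟪p k, q + r⟫) (V : Filter ℕ) (nhds (f q + f r)) := by
      have := (hf2 q).add (hf2 r)
      simpa [inner_add_right] using this
    exact tendsto_nhds_unique (hf2 (q + r)) h1
  have hsmul : ∀ (c : ℝ) (q : E), f (c • q) = c * f q := by
    intro c q
    have h1 : Tendsto (fun k => ⟪p k, c • q⟫) (V : Filter ℕ) (nhds (c * f q)) := by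
      have := (hf2 q).const_mul c
      simpa [real_inner_smul_right, mul_comm] using this
    exact tendsto_nhds_unique (hf2 (c • q)) h1
  have hbound : ∀ q : E, ‖f q‖ ≤ M * ‖q‖ := by
    intro q
    have := hf1 q
    rw [Real.norm_eq_abs, abs_le]
    exact ⟨this.1, this.2⟩
  let g : E →ₗ[ℝ] ℝ :=
    { toFun := f
      map_add' := hadd
      map_smul' := by intro c q; simpa using hsmul c q }
  let gc : E →L[ℝ] ℝ := LinearMap.mkContinuous g M hbound
  refine ⟨(InnerProductSpace.toDual ℝ E).symm gc, fun q => ?_⟩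
  have : ⟪(InnerProductSpace.toDual ℝ E).symm gc, q⟫ = gc q :=
    InnerProductSpace.toDual_symm_apply
  rw [this]
  exact hf2 q


set_option maxHeartbeats 1000000 in
lemma fejer_weak_conv
    (T : E → Set E) (hmono : ∀ ⦃x u y v⦄, u ∈ T x → v ∈ T y → (0:ℝ) ≤ ⟪u - v, x - y⟫)
    (hmax : ∀ x u, (∀ y v, v ∈ T y → (0:ℝ) ≤ ⟪u - v, x - y⟫) → u ∈ T x)
    (z0 : E) (hz0 : 0 ∈ T z0)
    (ε εθ C : ℝ) (hε : 0 < ε) (hC : 0 < C) (hεθ : 0 < εθ)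
    (θ : ℕ → ℝ) (hθ : ∀ k, εθ ≤ θ k ∧ θ k ≤ 2 - εθ)
    (p ph d : ℕ → E) (φ : ℕ → ℝ)
    (hd : ∀ k, d k ∈ T (ph k))
    (hφ1 : ∀ k, ε * ‖p k - ph k‖ ^ 2 ≤ φ k)
    (hφ2 : ∀ k, ⟪d k, p k - ph k⟫ = φ k)
    (hdb : ∀ k, ‖d k‖ ≤ C * ‖p k - ph k‖)
    (hup : ∀ k, d k ≠ 0 → p (k+1) = p k - (θ k * (φ k / ‖d k‖ ^ 2)) • d k)
    (hup0 : ∀ k, d k = 0 → p (k+1) = p k) :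
    ∃ pbar, 0 ∈ T pbar ∧ ∀ q, Tendsto (fun k => ⟪p k, q⟫) atTop (nhds ⟪pbar, q⟫) := by
  have hφ0 : ∀ k, 0 ≤ φ k := fun k => le_trans (by positivity) (hφ1 k)
  have hr00 : ∀ k, φ k ≤ 0 → ‖p k - ph k‖ = 0 := by
    intro k hk
    have h3 := hφ1 k
    have h4 : ‖p k - ph k‖ ^ 2 ≤ 0 := by nlinarith [sq_nonneg ‖p k - ph k‖]
    have h5 : ‖p k - ph k‖ ^ 2 = 0 := le_antisymm h4 (sq_nonneg _)
    exact pow_eq_zero_iff two_ne_zero |>.mp h5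
  have hstay : ∀ k, 0 ∈ T (p k) → p (k+1) = p k := by
    intro k hk
    have h1 : (0:ℝ) ≤ ⟪d k - 0, ph k - p k⟫ := hmono (hd k) hk
    have h2 : ⟪d k - 0, ph k - p k⟫ = -φ k := by
      rw [sub_zero, ← hφ2 k, ← inner_neg_right, neg_sub]
    rw [h2] at h1
    have hr : ‖p k - ph k‖ = 0 := hr00 k (by linarith)
    have hdk : d k = 0 := by
      have h4 := hdb k
      rw [hr, mul_zero] at h4
      exact norm_le_zero_iff.mp h4
    exact hup0 k hdk
  by_cases hzC : ∃ k0, 0 ∈ T (p k0)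
  · obtain ⟨k0, hk0⟩ := hzC
    have hconst : ∀ n, p (k0 + n) = p k0 := by
      intro n
      induction n with
      | zero => rfl
      | succ n ih =>
        have h5 : 0 ∈ T (p (k0 + n)) := by rw [ih]; exact hk0
        have := hstay (k0 + n) h5
        rw [← Nat.add_assoc] at *
        rw [this, ih]
    refine ⟨p k0, hk0, fun q => ?_⟩
    have hev : ∀ᶠ k in atTop, (⟪p k0, q⟫ : ℝ) = ⟪p k, q⟫ := by
      filter_upwards [eventually_ge_atTop k0] with k hk
      obtain ⟨n, rfl⟩ := Nat.exists_eq_add_of_le hk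
      rw [hconst n]
    exact Tendsto.congr' hev tendsto_const_nhds
  · push_neg at hzC
    have hdne : ∀ k, d k ≠ 0 := by
      intro k hdk
      have hφk : φ k = 0 := by rw [← hφ2 k, hdk, inner_zero_left]
      have hr : p k - ph k = 0 := norm_eq_zero.mp (hr00 k hφk.le)
      have hpe : ph k = p k := by rw [sub_eq_zero] at hr; exact hr.symm
      refine hzC k ?_
      rw [← hdk]
      have := hd k
      rwa [hpe] at this
    have key : ∀ z, 0 ∈ T z → ∀ k,
        ‖p (k+1) - z‖ ^ 2 ≤ ‖p k - z‖ ^ 2 - (θ k * (2 - θ k)) * (φ k ^ 2 / ‖d k‖ ^ 2) := by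
      intro z hz k
      have hdkn : 0 < ‖d k‖ := norm_pos_iff.mpr (hdne k)
      have hD : (0:ℝ) < ‖d k‖ ^ 2 := by positivity
      set lam := θ k * (φ k / ‖d k‖ ^ 2) with hlam
      have hθk := hθ k
      have hlam0 : 0 ≤ lam := mul_nonneg (le_trans hεθ.le hθk.1) (div_nonneg (hφ0 k) hD.le)
      have hub : p (k+1) = p k - lam • d k := hup k (hdne k)
      have hip : φ k ≤ ⟪p k - z, d k⟫ := by
        have h1 : (0:ℝ) ≤ ⟪d k - 0, ph k - z⟫ := hmono (hd k) hz
        rw [sub_zero] at h1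
        have h2 : ⟪p k - z, d k⟫ = ⟪d k, p k - ph k⟫ + ⟪d k, ph k - z⟫ := by
          rw [real_inner_comm, ← inner_add_right, sub_add_sub_cancel]
        rw [h2, hφ2 k]
        linarith
      have hexp : ‖p (k+1) - z‖ ^ 2
          = ‖p k - z‖ ^ 2 - 2 * (lam * ⟪p k - z, d k⟫) + lam ^ 2 * ‖d k‖ ^ 2 := by
        rw [hub, sub_right_comm]
        rw [norm_sub_sq_real, real_inner_smul_right, norm_smul, Real.norm_eq_abs, mul_pow, sq_abs]
      rw [hexp]
      have h6 : lam ^ 2 * ‖d k‖ ^ 2 = θ k ^ 2 * (φ k ^ 2 / ‖d k‖ ^ 2) := by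
        rw [hlam]; field_simp
      have h7 : lam * φ k = θ k * (φ k ^ 2 / ‖d k‖ ^ 2) := by
        rw [hlam]; field_simp
      have h8 : lam * φ k ≤ lam * ⟪p k - z, d k⟫ := mul_le_mul_of_nonneg_left hip hlam0
      nlinarith [h8]
    have hanti : ∀ z, 0 ∈ T z → Antitone (fun k => ‖p k - z‖ ^ 2) := by
      intro z hz
      apply antitone_nat_of_succ_le
      intro k
      have h1 := key z hz k
      have hθk := hθ k
      have h2 : 0 ≤ (θ k * (2 - θ k)) * (φ k ^ 2 / ‖d k‖ ^ 2) := by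
        apply mul_nonneg
        · nlinarith [hθk.1, hθk.2]
        · positivity
      linarith
    have hconvz : ∀ z, 0 ∈ T z → ∃ Az : ℝ, Tendsto (fun k => ‖p k - z‖ ^ 2) atTop (nhds Az) := by
      intro z hz
      refine ⟨_, tendsto_atTop_ciInf (hanti z hz) ⟨0, ?_⟩⟩
      rintro x ⟨k, rfl⟩
      positivity
    obtain ⟨A0, hA0⟩ := hconvz z0 hz0
    -- r_k → 0
    set c : ℝ := (εθ * εθ) * (ε ^ 2 / C ^ 2) with hc
    have hcpos : 0 < c := by positivity
    have hkey2 : ∀ k, c * ‖p k - ph k‖ ^ 2 ≤ ‖p k - z0‖ ^ 2 - ‖p (k+1) - z0‖ ^ 2 := by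
      intro k
      have h1 := key z0 hz0 k
      have hθk := hθ k
      have hdkn : 0 < ‖d k‖ := norm_pos_iff.mpr (hdne k)
      have hD : (0:ℝ) < ‖d k‖ ^ 2 := by positivity
      have h2 : εθ * εθ ≤ θ k * (2 - θ k) := by nlinarith [hθk.1, hθk.2]
      have h3 : (ε ^ 2 / C ^ 2) * ‖p k - ph k‖ ^ 2 ≤ φ k ^ 2 / ‖d k‖ ^ 2 := by
        rcases eq_or_lt_of_le (norm_nonneg (p k - ph k)) with hre | hre
        · rw [← hre]
          norm_num
          positivity
        · have hb1 : ‖d k‖ ^ 2 ≤ C ^ 2 * ‖p k - ph k‖ ^ 2 := by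
            have := hdb k
            nlinarith [norm_nonneg (d k)]
          have hb2 : ε ^ 2 * (‖p k - ph k‖ ^ 2) ^ 2 ≤ φ k ^ 2 := by
            nlinarith [mul_le_mul (hφ1 k) (hφ1 k) (by positivity) (hφ0 k)]
          rw [div_mul_eq_mul_div, div_le_div_iff₀ (by positivity) hD]
          nlinarith [mul_le_mul_of_nonneg_left hb1
              (by positivity : (0:ℝ) ≤ ε ^ 2 * ‖p k - ph k‖ ^ 2),
            mul_le_mul_of_nonneg_left hb2 (sq_nonneg C)]
      have h4 : c * ‖p k - ph k‖ ^ 2 ≤ (θ k * (2 - θ k)) * (φ k ^ 2 / ‖d k‖ ^ 2) := by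
        rw [hc, mul_assoc]
        exact mul_le_mul h2 h3 (by positivity) (by nlinarith [hθk.1, hθk.2])
      linarith
    have hrz : Tendsto (fun k => ‖p k - ph k‖) atTop (nhds 0) := by
      have hdiff : Tendsto (fun k => ‖p k - z0‖ ^ 2 - ‖p (k+1) - z0‖ ^ 2) atTop (nhds (A0 - A0)) := by
        refine hA0.sub ?_
        exact hA0.comp (tendsto_add_atTop_nat 1)
      rw [sub_self] at hdiff
      have hsq : Tendsto (fun k => ‖p k - ph k‖ ^ 2) atTop (nhds 0) := by
        have h1 : Tendsto (fun k => c * ‖p k - ph k‖ ^ 2) atTop (nhds 0) :=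
          squeeze_zero (fun k => by positivity) hkey2 hdiff
        have h2 := h1.const_mul c⁻¹
        rw [mul_zero] at h2
        refine h2.congr (fun k => ?_)
        field_simp
      have h3 : Tendsto (fun k => Real.sqrt (‖p k - ph k‖ ^ 2)) atTop (nhds (Real.sqrt 0)) :=
        (Real.continuous_sqrt.tendsto 0).comp hsq
      rw [Real.sqrt_zero] at h3
      exact h3.congr (fun k => Real.sqrt_sq (norm_nonneg _))
    have hdz : Tendsto (fun k => ‖d k‖) atTop (nhds 0) := by
      have h1 : Tendsto (fun k => C * ‖p k - ph k‖) atTop (nhds (C * 0)) := hrz.const_mul C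
      rw [mul_zero] at h1
      exact squeeze_zero (fun k => norm_nonneg _) hdb h1
    -- uniform bound
    have hbd : ∀ k, ‖p k‖ ≤ ‖z0‖ + ‖p 0 - z0‖ := by
      intro k
      have h1 : ‖p k - z0‖ ^ 2 ≤ ‖p 0 - z0‖ ^ 2 := hanti z0 hz0 (Nat.zero_le k)
      have h2 : ‖p k - z0‖ ≤ ‖p 0 - z0‖ := by
        nlinarith [norm_nonneg (p k - z0), norm_nonneg (p 0 - z0)]
      calc ‖p k‖ = ‖z0 + (p k - z0)‖ := by rw [add_sub_cancel]
        _ ≤ ‖z0‖ + ‖p k - z0‖ := norm_add_le _ _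
        _ ≤ _ := by linarith
    set M : ℝ := ‖z0‖ + ‖p 0 - z0‖ with hM
    have hcluster : ∀ V : Ultrafilter ℕ, (V : Filter ℕ) ≤ atTop →
        ∃ pb, 0 ∈ T pb ∧ ∀ q, Tendsto (fun k => ⟪p k, q⟫) (V : Filter ℕ) (nhds ⟪pb, q⟫) := by
      intro V hV
      obtain ⟨pb, hpb⟩ := ultra_weak_limit p M hbd V
      refine ⟨pb, ?_, hpb⟩
      apply hmax
      intro y w hw
      have hk : ∀ k, (0:ℝ) ≤ ⟪d k - w, ph k - y⟫ := fun k => hmono (hd k) hw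
      have hdecomp : ∀ k, (⟪d k - w, ph k - y⟫ : ℝ) =
          ⟪d k, ph k - y⟫ - ⟪w, p k⟫ + ⟪w, p k - ph k⟫ + ⟪w, y⟫ := by
        intro k
        rw [inner_sub_left, inner_sub_right (𝕜 := ℝ) w (ph k) y,
          inner_sub_right (𝕜 := ℝ) w (p k) (ph k)]
        have h9 : (⟪w, ph k⟫ : ℝ) = ⟪w, p k⟫ - (⟪w, p k⟫ - ⟪w, ph k⟫) := by ring
        linarith [h9]
      have hb1 : Tendsto (fun k => (⟪d k, ph k - y⟫ : ℝ)) atTop (nhds 0) := by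
        have hgt : Tendsto (fun k => ‖d k‖ * (M + ‖p k - ph k‖ + ‖y‖)) atTop
            (nhds (0 * (M + 0 + ‖y‖))) := by
          exact hdz.mul (((hrz.const_add M).add_const ‖y‖))
        rw [zero_mul] at hgt
        refine squeeze_zero_norm (fun k => ?_) hgt
        have e1 : |(⟪d k, ph k - y⟫ : ℝ)| ≤ ‖d k‖ * ‖ph k - y‖ := abs_real_inner_le_norm _ _
        have e2 : ‖ph k - y‖ ≤ M + ‖p k - ph k‖ + ‖y‖ := by
          have e3 : ph k - y = p k - (p k - ph k) - y := by abel
          rw [e3]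
          calc ‖p k - (p k - ph k) - y‖ ≤ ‖p k - (p k - ph k)‖ + ‖y‖ := norm_sub_le _ _
            _ ≤ ‖p k‖ + ‖p k - ph k‖ + ‖y‖ := by linarith [norm_sub_le (p k) (p k - ph k)]
            _ ≤ M + ‖p k - ph k‖ + ‖y‖ := by linarith [hbd k]
        rw [Real.norm_eq_abs]
        exact e1.trans (mul_le_mul_of_nonneg_left e2 (norm_nonneg _))
      have hb2 : Tendsto (fun k => (⟪w, p k⟫ : ℝ)) (V : Filter ℕ) (nhds ⟪pb, w⟫) := by
        refine (hpb w).congr (fun k => ?_)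
        exact real_inner_comm _ _
      have hb3 : Tendsto (fun k => (⟪w, p k - ph k⟫ : ℝ)) atTop (nhds 0) := by
        have hgt : Tendsto (fun k => ‖w‖ * ‖p k - ph k‖) atTop (nhds (‖w‖ * 0)) :=
          hrz.const_mul ‖w‖
        rw [mul_zero] at hgt
        refine squeeze_zero_norm (fun k => ?_) hgt
        rw [Real.norm_eq_abs]
        exact abs_real_inner_le_norm _ _
      have hlim : Tendsto (fun k => (⟪d k - w, ph k - y⟫ : ℝ)) (V : Filter ℕ)
          (nhds (0 - ⟪pb, w⟫ + 0 + ⟪w, y⟫)) := by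
        refine Tendsto.congr (fun k => (hdecomp k).symm) ?_
        exact (((hb1.mono_left hV).sub hb2).add (hb3.mono_left hV)).add_const _
      have hge : (0:ℝ) ≤ 0 - ⟪pb, w⟫ + 0 + ⟪w, y⟫ := ge_of_tendsto' hlim hk
      have : (⟪(0:E) - w, pb - y⟫ : ℝ) = 0 - ⟪pb, w⟫ + 0 + ⟪w, y⟫ := by
        rw [zero_sub, inner_neg_left, inner_sub_right]
        rw [real_inner_comm w pb]
        ring
      rw [this]
      exact hge
    obtain ⟨pbar, hpbar1, hpbar2⟩ := hcluster (Ultrafilter.of atTop) (Ultrafilter.of_le _)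
    refine ⟨pbar, hpbar1, fun q => ?_⟩
    rw [tendsto_iff_ultrafilter]
    intro V hV
    obtain ⟨pb, hpb1, hpb2⟩ := hcluster V hV
    have hsame : pb = pbar := by
      obtain ⟨A1, hA1⟩ := hconvz pbar hpbar1
      obtain ⟨A2, hA2⟩ := hconvz pb hpb1
      have hrepr : ∀ k, (⟪p k, pbar - pb⟫ : ℝ) =
          (‖p k - pb‖ ^ 2 - ‖p k - pbar‖ ^ 2 - ‖pb‖ ^ 2 + ‖pbar‖ ^ 2) / 2 := by
        intro k
        have e1 := norm_sub_sq_real (p k) pb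
        have e2 := norm_sub_sq_real (p k) pbar
        have e3 : (⟪p k, pbar - pb⟫ : ℝ) = ⟪p k, pbar⟫ - ⟪p k, pb⟫ :=
          inner_sub_right _ _ _
        linarith
      have hseq : Tendsto (fun k => (⟪p k, pbar - pb⟫ : ℝ)) atTop
          (nhds ((A2 - A1 - ‖pb‖ ^ 2 + ‖pbar‖ ^ 2) / 2)) := by
        refine Tendsto.congr (fun k => (hrepr k).symm) ?_
        exact (((hA2.sub hA1).sub_const (‖pb‖ ^ 2)).add_const (‖pbar‖ ^ 2)).div_const 2
      have e1 : (⟪pbar, pbar - pb⟫ : ℝ) = (A2 - A1 - ‖pb‖ ^ 2 + ‖pbar‖ ^ 2) / 2 :=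
        tendsto_nhds_unique (hpbar2 _) (hseq.mono_left (Ultrafilter.of_le _))
      have e2 : (⟪pb, pbar - pb⟫ : ℝ) = (A2 - A1 - ‖pb‖ ^ 2 + ‖pbar‖ ^ 2) / 2 :=
        tendsto_nhds_unique (hpb2 _) (hseq.mono_left hV)
      have e3 : (⟪pbar - pb, pbar - pb⟫ : ℝ) = 0 := by
        rw [inner_sub_left]
        linarith
      have e4 := inner_self_eq_zero.mp e3
      rw [sub_eq_zero] at e4
      exact e4.symm
    rw [← hsame]
    exact hpb2 q

end Aux

section Main
open scoped RealInnerProductSpace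

instance piLp_completeSpace_aux {m : ℕ} {G : Fin m → Type*} [∀ i, NormedAddCommGroup (G i)]
    [∀ i, CompleteSpace (G i)] : CompleteSpace (PiLp 2 G) := inferInstance

set_option maxHeartbeats 3200000 in
set_option synthInstance.maxHeartbeats 1000000 in
/-- weak convergence of synchronous projective splitting, formulated as
nonlinear forward-backward splitting on the primal-dual product space
`𝒦 = G₁ × ⋯ × G_m × H` (with the ℓ²-product Hilbert structure). -/
theorem synchronous_projective_splitting_convergence
    {m : ℕ} {G : Fin m → Type*} [∀ i, NormedAddCommGroup (G i)]
    [∀ i, InnerProductSpace ℝ (G i)] [∀ i, CompleteSpace (G i)]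
    {H : Type*} [NormedAddCommGroup H] [InnerProductSpace ℝ H] [CompleteSpace H]
    (A : ∀ i, G i → Set (G i)) (hA : ∀ i, IsMaxMonotoneOp (A i))
    (An : H → Set H) (hAn : IsMaxMonotoneOp An)
    (L : ∀ i, H →L[ℝ] G i)
    -- the primal-dual operator B on 𝒦
    (B : (WithLp 2 ((PiLp 2 G) × H)) → Set (WithLp 2 ((PiLp 2 G) × H)))
    (hB : ∀ p q : WithLp 2 ((PiLp 2 G) × H),
      q ∈ B p ↔ (∀ i, p.ofLp.1 i ∈ A i (q.ofLp.1 i)) ∧ q.ofLp.2 ∈ An p.ofLp.2)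
    -- the skew-adjoint operator K on 𝒦
    (Kop : (WithLp 2 ((PiLp 2 G) × H)) → (WithLp 2 ((PiLp 2 G) × H)))
    (hKop : ∀ p : WithLp 2 ((PiLp 2 G) × H),
      Kop p = WithLp.toLp 2 (WithLp.toLp 2 ((fun i => -(L i p.ofLp.2)) : ∀ i, G i),
               ∑ i, ContinuousLinearMap.adjoint (L i) (p.ofLp.1 i)))
    -- nonemptiness of zer(B + K)
    (hzer : ∃ p : WithLp 2 ((PiLp 2 G) × H), -Kop p ∈ B p)
    -- step-sizes and relaxation parameters
    (ε εθ : ℝ) (hε : 0 < ε ∧ ε < 1) (hεθ : 0 < εθ ∧ εθ < 1)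
    (τ : ℕ → Fin m → ℝ) (σ : ℕ → ℝ)
    (hτ : ∀ k i, ε ≤ τ k i ∧ τ k i ≤ 1 / ε)
    (hσ : ∀ k, ε ≤ σ k ∧ σ k ≤ 1 / ε)
    (θ : ℕ → ℝ) (hθ : ∀ k, εθ ≤ θ k ∧ θ k ≤ 2 - εθ)
    -- the block-diagonal kernels Q_k
    (Q : ℕ → (WithLp 2 ((PiLp 2 G) × H)) → (WithLp 2 ((PiLp 2 G) × H)))
    (hQ : ∀ k (p : WithLp 2 ((PiLp 2 G) × H)),
      Q k p = WithLp.toLp 2 (WithLp.toLp 2 ((fun i => τ k i • p.ofLp.1 i) : ∀ i, G i), (σ k)⁻¹ • p.ofLp.2))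
    -- the algorithm
    (p ph : ℕ → WithLp 2 ((PiLp 2 G) × H))
    (hph : ∀ k, Q k (p k) - Kop (p k) - Q k (ph k) ∈ B (ph k))
    (hupd : ∀ k, Q k (p k - ph k) - Kop (p k - ph k) ≠ 0 →
      p (k + 1) = p k -
        (θ k * ((inner ℝ (p k - ph k) (Q k (p k - ph k)) : ℝ) /
            ‖Q k (p k - ph k) - Kop (p k - ph k)‖ ^ 2)) •
          ((Q k (p k) - Kop (p k)) - (Q k (ph k) - Kop (ph k))))
    (hupd0 : ∀ k, Q k (p k - ph k) - Kop (p k - ph k) = 0 → p (k + 1) = p k) :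
    ∃ pbar : WithLp 2 ((PiLp 2 G) × H), -Kop pbar ∈ B pbar ∧
      ∀ q : WithLp 2 ((PiLp 2 G) × H),
        Tendsto (fun k => (inner ℝ (p k) q : ℝ)) atTop (nhds (inner ℝ pbar q)) := by
  obtain ⟨hε1, hε2⟩ := hε
  obtain ⟨hεθ1, hεθ2⟩ := hεθ
  -- inner product and norm on the product space
  have hin : ∀ x y : WithLp 2 ((PiLp 2 G) × H),
      (⟪x, y⟫ : ℝ) = ∑ i, ⟪x.ofLp.1 i, y.ofLp.1 i⟫ + ⟪x.ofLp.2, y.ofLp.2⟫ := by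
    intro x y
    rw [WithLp.prod_inner_apply, PiLp.inner_apply]
  have hnorm : ∀ x : WithLp 2 ((PiLp 2 G) × H), ‖x‖ ^ 2 = ∑ i, ‖x.ofLp.1 i‖ ^ 2 + ‖x.ofLp.2‖ ^ 2 := by
    intro x
    rw [← real_inner_self_eq_norm_sq, WithLp.prod_inner_apply, PiLp.inner_apply,
      real_inner_self_eq_norm_sq]
    congr 1
    exact Finset.sum_congr rfl fun i _ => real_inner_self_eq_norm_sq _
  -- K facts
  have hK1 : ∀ x : WithLp 2 ((PiLp 2 G) × H), ∀ i, (Kop x).ofLp.1 i = -(L i x.ofLp.2) := by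
    intro x i; rw [hKop]
  have hK2 : ∀ x : WithLp 2 ((PiLp 2 G) × H),
      (Kop x).ofLp.2 = ∑ i, ContinuousLinearMap.adjoint (L i) (x.ofLp.1 i) := by
    intro x; rw [hKop]
  have Ksub : ∀ a b : WithLp 2 ((PiLp 2 G) × H), Kop (a - b) = Kop a - Kop b := by
    intro a b
    refine WithLp.ofLp_injective 2 (Prod.ext ?_ ?_)
    · refine PiLp.ext fun i => ?_
      show (Kop (a-b)).ofLp.1 i = (Kop a).ofLp.1 i - (Kop b).ofLp.1 i
      rw [hK1, hK1, hK1]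
      show -(L i (a.ofLp.2 - b.ofLp.2)) = _
      rw [map_sub]; abel
    · show (Kop (a-b)).ofLp.2 = (Kop a).ofLp.2 - (Kop b).ofLp.2
      rw [hK2, hK2, hK2, ← Finset.sum_sub_distrib]
      refine Finset.sum_congr rfl fun i _ => ?_
      show ContinuousLinearMap.adjoint (L i) (a.ofLp.1 i - b.ofLp.1 i) = _
      rw [map_sub]
  have Kskew : ∀ x : WithLp 2 ((PiLp 2 G) × H), (⟪Kop x, x⟫ : ℝ) = 0 := by
    intro x
    rw [hin]
    have h1 : ∀ i, (⟪(Kop x).ofLp.1 i, x.ofLp.1 i⟫ : ℝ) = -⟪x.ofLp.1 i, L i x.ofLp.2⟫ := by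
      intro i
      rw [hK1, inner_neg_left]
      rw [real_inner_comm]
    have h2 : (⟪(Kop x).ofLp.2, x.ofLp.2⟫ : ℝ) = ∑ i, ⟪x.ofLp.1 i, L i x.ofLp.2⟫ := by
      rw [hK2, sum_inner]
      exact Finset.sum_congr rfl fun i _ => ContinuousLinearMap.adjoint_inner_left _ _ _
    rw [h2, Finset.sum_congr rfl fun i _ => h1 i, ← Finset.sum_add_distrib]
    simp
  have Kbound : ∀ x : WithLp 2 ((PiLp 2 G) × H),
      ‖Kop x‖ ≤ Real.sqrt (∑ i, ‖L i‖ ^ 2) * ‖x‖ := by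
    intro x
    have hS : (0:ℝ) ≤ ∑ i, ‖L i‖ ^ 2 := Finset.sum_nonneg fun i _ => sq_nonneg _
    refine le_of_pow_le_pow_left₀ two_ne_zero (by positivity) ?_
    rw [mul_pow, Real.sq_sqrt hS, hnorm (Kop x), hnorm x]
    have e1 : ∀ i, ‖(Kop x).ofLp.1 i‖ ^ 2 = ‖L i x.ofLp.2‖ ^ 2 := by
      intro i; rw [hK1, norm_neg]
    have e2 : ∑ i, ‖(Kop x).ofLp.1 i‖ ^ 2 ≤ (∑ i, ‖L i‖ ^ 2) * ‖x.ofLp.2‖ ^ 2 := by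
      rw [Finset.sum_congr rfl fun i _ => e1 i, Finset.sum_mul]
      refine Finset.sum_le_sum fun i _ => ?_
      have := (L i).le_opNorm x.ofLp.2
      nlinarith [norm_nonneg (L i x.ofLp.2), norm_nonneg x.ofLp.2, (L i).opNorm_nonneg]
    have e3 : ‖(Kop x).ofLp.2‖ ^ 2 ≤ (∑ i, ‖L i‖ ^ 2) * ∑ i, ‖x.ofLp.1 i‖ ^ 2 := by
      rw [hK2]
      have e4 : ‖∑ i, ContinuousLinearMap.adjoint (L i) (x.ofLp.1 i)‖ ≤ ∑ i, ‖L i‖ * ‖x.ofLp.1 i‖ := by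
        refine (norm_sum_le _ _).trans (Finset.sum_le_sum fun i _ => ?_)
        have := (ContinuousLinearMap.adjoint (L i)).le_opNorm (x.ofLp.1 i)
        rwa [ContinuousLinearMap.adjoint.norm_map (L i)] at this
      have e5 : (∑ i, ‖L i‖ * ‖x.ofLp.1 i‖) ^ 2 ≤ (∑ i, ‖L i‖ ^ 2) * ∑ i, ‖x.ofLp.1 i‖ ^ 2 :=
        Finset.sum_mul_sq_le_sq_mul_sq _ _ _
      have e7 : ‖∑ i, ContinuousLinearMap.adjoint (L i) (x.ofLp.1 i)‖ ^ 2
          ≤ (∑ i, ‖L i‖ * ‖x.ofLp.1 i‖) ^ 2 := pow_le_pow_left₀ (norm_nonneg _) e4 2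
      linarith
    nlinarith [e2, e3]
  -- Q facts
  have hQ1 : ∀ k (x : WithLp 2 ((PiLp 2 G) × H)) i, (Q k x).ofLp.1 i = τ k i • x.ofLp.1 i := by
    intro k x i; rw [hQ]
  have hQ2 : ∀ k (x : WithLp 2 ((PiLp 2 G) × H)), (Q k x).ofLp.2 = (σ k)⁻¹ • x.ofLp.2 := by
    intro k x; rw [hQ]
  have Qsub : ∀ k (a b : WithLp 2 ((PiLp 2 G) × H)), Q k (a - b) = Q k a - Q k b := by
    intro k a b
    refine WithLp.ofLp_injective 2 (Prod.ext ?_ ?_)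
    · refine PiLp.ext fun i => ?_
      show (Q k (a-b)).ofLp.1 i = (Q k a).ofLp.1 i - (Q k b).ofLp.1 i
      rw [hQ1, hQ1, hQ1]
      show τ k i • (a.ofLp.1 i - b.ofLp.1 i) = _
      rw [smul_sub]
    · show (Q k (a-b)).ofLp.2 = (Q k a).ofLp.2 - (Q k b).ofLp.2
      rw [hQ2, hQ2, hQ2]
      show (σ k)⁻¹ • (a.ofLp.2 - b.ofLp.2) = _
      rw [smul_sub]
  have hσpos : ∀ k, 0 < σ k := fun k => lt_of_lt_of_le hε1 (hσ k).1
  have hσinv1 : ∀ k, ε ≤ (σ k)⁻¹ := by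
    intro k
    rw [← one_div, le_div_iff₀ (hσpos k)]
    have h1 : ε * σ k ≤ ε * (1/ε) := mul_le_mul_of_nonneg_left (hσ k).2 hε1.le
    have h2 : ε * (1/ε) = 1 := by field_simp
    nlinarith
  have hσinv2 : ∀ k, (σ k)⁻¹ ≤ 1 / ε := by
    intro k
    rw [← one_div, div_le_div_iff₀ (hσpos k) hε1]
    nlinarith [(hσ k).1, hσpos k]
  have Qinner : ∀ k (x : WithLp 2 ((PiLp 2 G) × H)),
      (⟪x, Q k x⟫ : ℝ) = ∑ i, τ k i * ‖x.ofLp.1 i‖ ^ 2 + (σ k)⁻¹ * ‖x.ofLp.2‖ ^ 2 := by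
    intro k x
    rw [hin]
    congr 1
    · refine Finset.sum_congr rfl fun i _ => ?_
      rw [hQ1, real_inner_smul_right, real_inner_self_eq_norm_sq]
    · rw [hQ2, real_inner_smul_right, real_inner_self_eq_norm_sq]
  have Qlow : ∀ k (x : WithLp 2 ((PiLp 2 G) × H)), ε * ‖x‖ ^ 2 ≤ ⟪x, Q k x⟫ := by
    intro k x
    rw [Qinner, hnorm, mul_add, Finset.mul_sum]
    refine add_le_add (Finset.sum_le_sum fun i _ => ?_) ?_
    · exact mul_le_mul_of_nonneg_right (hτ k i).1 (sq_nonneg _)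
    · exact mul_le_mul_of_nonneg_right (hσinv1 k) (sq_nonneg _)
  have Qbound : ∀ k (x : WithLp 2 ((PiLp 2 G) × H)), ‖Q k x‖ ≤ (1/ε) * ‖x‖ := by
    intro k x
    refine le_of_pow_le_pow_left₀ two_ne_zero (by positivity) ?_
    rw [mul_pow, hnorm (Q k x), hnorm x]
    have e1 : ∀ i, ‖(Q k x).ofLp.1 i‖ ^ 2 ≤ (1/ε) ^ 2 * ‖x.ofLp.1 i‖ ^ 2 := by
      intro i
      rw [hQ1, norm_smul, Real.norm_eq_abs, mul_pow, sq_abs]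
      have h1 := hτ k i
      have h2 : τ k i ^ 2 ≤ (1/ε) ^ 2 := by nlinarith [hε1, h1.1, h1.2]
      nlinarith [sq_nonneg ‖x.ofLp.1 i‖]
    have e2 : ‖(Q k x).ofLp.2‖ ^ 2 ≤ (1/ε) ^ 2 * ‖x.ofLp.2‖ ^ 2 := by
      rw [hQ2, norm_smul, Real.norm_eq_abs, mul_pow, sq_abs]
      have h2 : ((σ k)⁻¹) ^ 2 ≤ (1/ε) ^ 2 := by nlinarith [hσinv1 k, hσinv2 k, hε1]
      nlinarith [sq_nonneg ‖x.ofLp.2‖]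
    have e3 := Finset.sum_le_sum fun i (_ : i ∈ Finset.univ) => e1 i
    rw [← Finset.mul_sum] at e3
    nlinarith [e2, e3]
  -- the operator T = B + K
  set T : (WithLp 2 ((PiLp 2 G) × H)) → Set (WithLp 2 ((PiLp 2 G) × H)) :=
    fun x => {u | u - Kop x ∈ B x} with hTdef
  have Bmono : ∀ ⦃x u y v : WithLp 2 ((PiLp 2 G) × H)⦄,
      u ∈ B x → v ∈ B y → (0:ℝ) ≤ ⟪u - v, x - y⟫ := by
    intro x u y v hu hv
    rw [hB] at hu hv
    rw [hin]
    refine add_nonneg (Finset.sum_nonneg fun i _ => ?_) ?_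
    · have h1 := (hA i).1 (hu.1 i) (hv.1 i)
      rw [real_inner_comm] at h1
      exact h1
    · exact hAn.1 hu.2 hv.2
  have Tmono : ∀ ⦃x u y v : WithLp 2 ((PiLp 2 G) × H)⦄,
      u ∈ T x → v ∈ T y → (0:ℝ) ≤ ⟪u - v, x - y⟫ := by
    intro x u y v hu hv
    have h1 := Bmono hu hv
    have h2 : (⟪u - v, x - y⟫ : ℝ)
        = ⟪(u - Kop x) - (v - Kop y), x - y⟫ + ⟪Kop x - Kop y, x - y⟫ := by
      rw [← inner_add_left]
      congr 1
      abel
    have h3 : (⟪Kop x - Kop y, x - y⟫ : ℝ) = 0 := by rw [← Ksub]; exact Kskew _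
    rw [h2, h3]
    linarith
  have Tmax : ∀ x u, (∀ y v, v ∈ T y → (0:ℝ) ≤ ⟪u - v, x - y⟫) → u ∈ T x := by
    intro x u hcond
    have HB : ∀ y v, v ∈ B y → (0:ℝ) ≤ ⟪(u - Kop x) - v, x - y⟫ := by
      intro y v hv
      have h1 : v + Kop y ∈ T y := by
        show v + Kop y - Kop y ∈ B y
        rwa [add_sub_cancel_right]
      have h2 := hcond y (v + Kop y) h1
      have h3 : (⟪(u - Kop x) - v, x - y⟫ : ℝ)
          = ⟪u - (v + Kop y), x - y⟫ - ⟪Kop x - Kop y, x - y⟫ := by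
        rw [← inner_sub_left]
        congr 1
        abel
      have h4 : (⟪Kop x - Kop y, x - y⟫ : ℝ) = 0 := by rw [← Ksub]; exact Kskew _
      rw [h3, h4]
      linarith
    show u - Kop x ∈ B x
    rw [hB]
    by_contra hcon
    have hchoiceG : ∀ i : Fin m, ∃ gv gy : G i, gy ∈ A i gv ∧
        (⟪(u - Kop x).ofLp.1 i - gv, x.ofLp.1 i - gy⟫ : ℝ) ≤ 0 ∧
        (x.ofLp.1 i ∉ A i ((u - Kop x).ofLp.1 i) → (⟪(u - Kop x).ofLp.1 i - gv, x.ofLp.1 i - gy⟫ : ℝ) < 0) := by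
      intro i
      by_cases hi : x.ofLp.1 i ∈ A i ((u - Kop x).ofLp.1 i)
      · exact ⟨(u - Kop x).ofLp.1 i, x.ofLp.1 i, hi, by simp, fun h => absurd hi h⟩
      · have h5 : ¬ ∀ y v, v ∈ A i y → (0:ℝ) ≤ ⟪x.ofLp.1 i - v, (u - Kop x).ofLp.1 i - y⟫ := by
          intro h6
          exact hi ((hA i).2 _ _ h6)
        push_neg at h5
        obtain ⟨y, v, hv, hlt⟩ := h5
        refine ⟨y, v, hv, ?_, fun _ => ?_⟩ <;>
          · rw [real_inner_comm]; linarith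
    choose gv gy hg1 hg2 hg3 using hchoiceG
    have hchoiceH : ∃ gy2 gv2 : H, gv2 ∈ An gy2 ∧
        (⟪(u - Kop x).ofLp.2 - gv2, x.ofLp.2 - gy2⟫ : ℝ) ≤ 0 ∧
        ((u - Kop x).ofLp.2 ∉ An x.ofLp.2 → (⟪(u - Kop x).ofLp.2 - gv2, x.ofLp.2 - gy2⟫ : ℝ) < 0) := by
      by_cases hH : (u - Kop x).ofLp.2 ∈ An x.ofLp.2
      · exact ⟨x.ofLp.2, (u - Kop x).ofLp.2, hH, by simp, fun h => absurd hH h⟩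
      · have h5 : ¬ ∀ y v, v ∈ An y → (0:ℝ) ≤ ⟪(u - Kop x).ofLp.2 - v, x.ofLp.2 - y⟫ := by
          intro h6
          exact hH (hAn.2 _ _ h6)
        push_neg at h5
        obtain ⟨y, v, hv, hlt⟩ := h5
        exact ⟨y, v, hv, hlt.le, fun _ => hlt⟩
    obtain ⟨gy2, gv2, hh1, hh2, hh3⟩ := hchoiceH
    have hvvB : WithLp.toLp 2 (WithLp.toLp 2 gv, gv2)
        ∈ B (WithLp.toLp 2 (WithLp.toLp 2 gy, gy2)) := by
      rw [hB]
      exact ⟨fun i => hg1 i, hh1⟩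
    have h7 := HB _ _ hvvB
    rw [hin] at h7
    have h7' : (0:ℝ) ≤ ∑ i, (⟪(u - Kop x).ofLp.1 i - gv i, x.ofLp.1 i - gy i⟫ : ℝ)
        + ⟪(u - Kop x).ofLp.2 - gv2, x.ofLp.2 - gy2⟫ := h7
    rw [not_and_or] at hcon
    rcases hcon with hc1 | hc2
    · push_neg at hc1
      obtain ⟨i0, hi0⟩ := hc1
      have h9 : (∑ i, (⟪(u - Kop x).ofLp.1 i - gv i, x.ofLp.1 i - gy i⟫ : ℝ)) < 0 := by
        have h10 := Finset.sum_lt_sum (fun i (_ : i ∈ Finset.univ) => hg2 i)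
          ⟨i0, Finset.mem_univ i0, hg3 i0 hi0⟩
        simpa using h10
      linarith [hh2]
    · have h9 : (∑ i, (⟪(u - Kop x).ofLp.1 i - gv i, x.ofLp.1 i - gy i⟫ : ℝ)) ≤ 0 :=
        Finset.sum_nonpos fun i _ => hg2 i
      linarith [hh3 hc2]
  -- zero point
  obtain ⟨z0, hz0B⟩ := hzer
  have hz0 : (0 : WithLp 2 ((PiLp 2 G) × H)) ∈ T z0 := by
    show (0 : WithLp 2 ((PiLp 2 G) × H)) - Kop z0 ∈ B z0
    rwa [zero_sub]
  -- hypotheses of the abstract lemma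
  have hdT : ∀ k, (Q k (p k - ph k) - Kop (p k - ph k)) ∈ T (ph k) := by
    intro k
    show Q k (p k - ph k) - Kop (p k - ph k) - Kop (ph k) ∈ B (ph k)
    have h1 : Q k (p k - ph k) - Kop (p k - ph k) - Kop (ph k)
        = Q k (p k) - Kop (p k) - Q k (ph k) := by
      rw [Qsub, Ksub]
      abel
    rw [h1]
    exact hph k
  have hφ1' : ∀ k, ε * ‖p k - ph k‖ ^ 2 ≤ (⟪p k - ph k, Q k (p k - ph k)⟫ : ℝ) :=
    fun k => Qlow k _
  have hφ2' : ∀ k, (⟪Q k (p k - ph k) - Kop (p k - ph k), p k - ph k⟫ : ℝ)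
      = ⟪p k - ph k, Q k (p k - ph k)⟫ := by
    intro k
    rw [inner_sub_left, Kskew, sub_zero, real_inner_comm]
  have hdb' : ∀ k, ‖Q k (p k - ph k) - Kop (p k - ph k)‖
      ≤ (1/ε + Real.sqrt (∑ i, ‖L i‖ ^ 2)) * ‖p k - ph k‖ := by
    intro k
    calc ‖Q k (p k - ph k) - Kop (p k - ph k)‖
        ≤ ‖Q k (p k - ph k)‖ + ‖Kop (p k - ph k)‖ := norm_sub_le _ _
      _ ≤ (1/ε) * ‖p k - ph k‖ + Real.sqrt (∑ i, ‖L i‖ ^ 2) * ‖p k - ph k‖ :=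
          add_le_add (Qbound k _) (Kbound _)
      _ = _ := by ring
  have hup' : ∀ k, Q k (p k - ph k) - Kop (p k - ph k) ≠ 0 →
      p (k+1) = p k - (θ k * ((⟪p k - ph k, Q k (p k - ph k)⟫ : ℝ)
        / ‖Q k (p k - ph k) - Kop (p k - ph k)‖ ^ 2)) •
        (Q k (p k - ph k) - Kop (p k - ph k)) := by
    intro k hk
    have h1 : (Q k (p k) - Kop (p k)) - (Q k (ph k) - Kop (ph k))
        = Q k (p k - ph k) - Kop (p k - ph k) := by
      rw [Qsub, Ksub]
      abel
    have h2 := hupd k hk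
    rw [h1] at h2
    exact h2
  have hCpos : 0 < 1/ε + Real.sqrt (∑ i, ‖L i‖ ^ 2) := by
    have := Real.sqrt_nonneg (∑ i, ‖L i‖ ^ 2)
    positivity
  obtain ⟨pbar, hp1, hp2⟩ := fejer_weak_conv T Tmono Tmax z0 hz0 ε εθ
    (1/ε + Real.sqrt (∑ i, ‖L i‖ ^ 2)) hε1 hCpos hεθ1 θ hθ p ph
    (fun k => Q k (p k - ph k) - Kop (p k - ph k))
    (fun k => ⟪p k - ph k, Q k (p k - ph k)⟫)
    hdT hφ1' hφ2' hdb' hup' hupd0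
  refine ⟨pbar, ?_, hp2⟩
  have hp1' : (0 : WithLp 2 ((PiLp 2 G) × H)) - Kop pbar ∈ B pbar := hp1
  rwa [zero_sub] at hp1'

end Main
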